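/- For p ≥ 0, ∑_{n=0}^∞ ( ∑_{j=0}^{n} (j+r)_{p,λ} ) x^n/n! = e^x φ_{p,λ}^{(r)}(x) + e^x ∫_0^x φ_{p,λ}^{(r)}(t) dt. -/

import Mathlib

open Finset Polynomial

/-- Generalized falling factorial `(y)_{m,λ} = y(y-λ)⋯(y-(m-1)λ)`. -/
noncomputable def degFallFact (y l : ℝ) (m : ℕ) : ℝ :=
  ∏ i ∈ Finset.range m, (y - i * l)

/-- Degenerate r-Bell polynomial via the Dobinski-like formula
`φ_{p,λ}^{(r)}(x) = e^{-x} ∑_{k≥0} (k+r)_{p,λ} x^k/k!`. -/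
noncomputable def degBell (l : ℝ) (p r : ℕ) (x : ℝ) : ℝ :=
  Real.exp (-x) * ∑' k : ℕ, degFallFact (k + r) l p * x ^ k / k.factorial

/- ### Auxiliary lemmas -/

lemma aux_hasSum_exp (x : ℝ) : HasSum (fun n : ℕ => x ^ n / n.factorial) (Real.exp x) := by
  rw [Real.exp_eq_exp_ℝ]
  exact NormedSpace.expSeries_div_hasSum_exp x

lemma aux_hasSum_shift (m : ℕ) (x : ℝ) :
    HasSum (fun j : ℕ => x ^ (j + m) / j.factorial) (x ^ m * Real.exp x) := by
  have h := (aux_hasSum_exp x).mul_left (x ^ m)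
  refine h.congr_fun fun j => ?_
  rw [pow_add, mul_comm (x ^ j), mul_div_assoc]

lemma aux_descFact_mul_fact (m j : ℕ) :
    (j + m).descFactorial m * j.factorial = (j + m).factorial := by
  induction m with
  | zero => simp
  | succ m ih =>
    have h : j + (m + 1) = (j + m) + 1 := by omega
    rw [h, Nat.succ_descFactorial_succ, Nat.factorial_succ, mul_assoc, ih]

lemma aux_hasSum_descFact (m : ℕ) (x : ℝ) :
    HasSum (fun k : ℕ => (k.descFactorial m : ℝ) * x ^ k / k.factorial)
      (x ^ m * Real.exp x) := by
  have hinj : Function.Injective (fun j : ℕ => j + m) := fun a b h => by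
    simp only at h; omega
  refine (Function.Injective.hasSum_iff hinj ?_).mp ?_
  · intro k hk
    have hk' : k < m := by
      by_contra h
      exact hk ⟨k - m, by simp only; omega⟩
    simp [Nat.descFactorial_eq_zero_iff_lt.mpr hk']
  · refine (aux_hasSum_shift m x).congr_fun fun j => ?_
    have hf : ((j + m).descFactorial m : ℝ) * (j.factorial : ℝ) = ((j + m).factorial : ℝ) := by
      exact_mod_cast congrArg (Nat.cast (R := ℝ)) (aux_descFact_mul_fact m j)
    have h1 : (j.factorial : ℝ) ≠ 0 := by positivity
    have h2 : ((j + m).factorial : ℝ) ≠ 0 := by positivity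
    simp only [Function.comp_apply]
    field_simp
    linear_combination x ^ (j + m) * hf

lemma aux_hasSum_mul_descFact (m : ℕ) (x : ℝ) :
    HasSum (fun j : ℕ => (j : ℝ) * x ^ (j + m) / j.factorial)
      (x ^ (m + 1) * Real.exp x) := by
  have hinj : Function.Injective (fun j : ℕ => j + 1) := fun a b h => by
    simp only at h; omega
  refine (Function.Injective.hasSum_iff hinj ?_).mp ?_
  · intro k hk
    have hk' : k = 0 := by
      by_contra h
      exact hk ⟨k - 1, by simp only; omega⟩
    subst hk'
    show (((0:ℕ) : ℝ)) * x ^ (0 + m) / (Nat.factorial 0 : ℝ) = 0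
    norm_num
  · refine (aux_hasSum_shift (m + 1) x).congr_fun fun j => ?_
    show (((j + 1 : ℕ) : ℝ)) * x ^ ((j + 1) + m) / ((j + 1).factorial : ℝ)
      = x ^ (j + (m + 1)) / (j.factorial : ℝ)
    have h : j + 1 + m = j + (m + 1) := by omega
    rw [h, Nat.factorial_succ]
    have h1 : (j.factorial : ℝ) ≠ 0 := by positivity
    push_cast
    field_simp

lemma aux_hasSum_succ_descFact (m : ℕ) (x : ℝ) :
    HasSum (fun n : ℕ => (((n + 1).descFactorial (m + 1) : ℕ) : ℝ) * x ^ n / n.factorial)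
      ((m + 1) * x ^ m * Real.exp x + x ^ (m + 1) * Real.exp x) := by
  have hinj : Function.Injective (fun j : ℕ => j + m) := fun a b h => by
    simp only at h; omega
  refine (Function.Injective.hasSum_iff hinj ?_).mp ?_
  · intro k hk
    have hk' : k < m := by
      by_contra h
      exact hk ⟨k - m, by simp only; omega⟩
    have h0 : (k + 1).descFactorial (m + 1) = 0 :=
      Nat.descFactorial_eq_zero_iff_lt.mpr (by omega)
    show (((k + 1).descFactorial (m + 1) : ℕ) : ℝ) * x ^ k / k.factorial = 0
    rw [h0]
    norm_num
  · have hsum : HasSum (fun j : ℕ => ((m : ℝ) + 1) * (x ^ (j + m) / j.factorial)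
        + (j : ℝ) * x ^ (j + m) / j.factorial)
        ((m + 1) * x ^ m * Real.exp x + x ^ (m + 1) * Real.exp x) := by
      have h1 := (aux_hasSum_shift m x).mul_left ((m : ℝ) + 1)
      have h2 := aux_hasSum_mul_descFact m x
      have := h1.add h2
      rwa [← mul_assoc] at this
    refine hsum.congr_fun fun j => ?_
    have hd : (j + m + 1).descFactorial (m + 1) = (j + m + 1) * (j + m).descFactorial m :=
      Nat.succ_descFactorial_succ (j + m) m
    have hf : ((j + m).descFactorial m : ℝ) * (j.factorial : ℝ) = ((j + m).factorial : ℝ) := by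
      exact_mod_cast congrArg (Nat.cast (R := ℝ)) (aux_descFact_mul_fact m j)
    have h1 : (j.factorial : ℝ) ≠ 0 := by positivity
    have h2 : ((j + m).factorial : ℝ) ≠ 0 := by positivity
    have e1 : (((j + m).descFactorial m : ℕ) : ℝ) * x ^ (j + m) / ((j + m).factorial : ℝ)
        = x ^ (j + m) / (j.factorial : ℝ) := by
      field_simp
      linear_combination x ^ (j + m) * hf
    show ((((j + m) + 1).descFactorial (m + 1) : ℕ) : ℝ) * x ^ (j + m) / ((j + m).factorial : ℝ)
      = ((m : ℝ) + 1) * (x ^ (j + m) / j.factorial) + (j : ℝ) * x ^ (j + m) / j.factorial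
    calc ((((j + m) + 1).descFactorial (m + 1) : ℕ) : ℝ) * x ^ (j + m) / ((j + m).factorial : ℝ)
        = ((j : ℝ) + m + 1)
            * ((((j + m).descFactorial m : ℕ) : ℝ) * x ^ (j + m) / ((j + m).factorial : ℝ)) := by
          rw [hd]; push_cast; ring
      _ = ((j : ℝ) + m + 1) * (x ^ (j + m) / (j.factorial : ℝ)) := by rw [e1]
      _ = ((m : ℝ) + 1) * (x ^ (j + m) / j.factorial) + (j : ℝ) * x ^ (j + m) / j.factorial := by
          ring

/-- Newton expansion: every polynomial of degree `< n` is a linear combination of the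
descending Pochhammer polynomials of degree `< n`. -/
lemma aux_newton : ∀ (n : ℕ) (P : Polynomial ℝ), P.degree < (n : ℕ) →
    ∃ b : ℕ → ℝ, ∀ y : ℝ, P.eval y = ∑ m ∈ Finset.range n, b m * (descPochhammer ℝ m).eval y := by
  intro n
  induction n with
  | zero =>
    intro P h
    have : P = 0 := by
      have hb : P.degree = ⊥ := Nat.WithBot.lt_zero_iff.mp (by exact_mod_cast h)
      exact Polynomial.degree_eq_bot.mp hb
    exact ⟨fun _ => 0, fun y => by simp [this]⟩
  | succ n ih =>
    intro P h
    set c := P.coeff n with hc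
    set Q := P - Polynomial.C c * descPochhammer ℝ n with hQ
    have hdeg : Q.degree < (n : ℕ) := by
      rw [Polynomial.degree_lt_iff_coeff_zero]
      intro k hk
      have hk' : (n : ℕ) ≤ k := by exact_mod_cast hk
      rw [hQ, Polynomial.coeff_sub, Polynomial.coeff_C_mul]
      rcases eq_or_lt_of_le hk' with heq | hlt
      · rw [← heq]
        have hmon : (descPochhammer ℝ n).coeff n = 1 := by
          have h1 := monic_descPochhammer ℝ n
          have h2 : (descPochhammer ℝ n).natDegree = n := descPochhammer_natDegree (R := ℝ) n
          simpa [h2] using h1.coeff_natDegree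
        rw [hmon, mul_one, sub_self]
      · have hP : P.coeff k = 0 := by
          apply Polynomial.coeff_eq_zero_of_degree_lt
          exact lt_of_lt_of_le h (by exact_mod_cast Nat.cast_le.mpr hlt)
        have hD : (descPochhammer ℝ n).coeff k = 0 := by
          apply Polynomial.coeff_eq_zero_of_natDegree_lt
          rw [descPochhammer_natDegree (R := ℝ)]
          exact hlt
        rw [hP, hD, mul_zero, sub_zero]
    obtain ⟨b, hb⟩ := ih Q hdeg
    refine ⟨Function.update b n c, fun y => ?_⟩
    have hPy : P.eval y = Q.eval y + c * (descPochhammer ℝ n).eval y := by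
      rw [hQ]; simp only [Polynomial.eval_sub, Polynomial.eval_mul, Polynomial.eval_C]; ring
    rw [hPy, hb y, Finset.sum_range_succ, Function.update_self]
    congr 1
    apply Finset.sum_congr rfl
    intro m hm
    rw [Function.update_of_ne (by exact Nat.ne_of_lt (Finset.mem_range.mp hm))]

/-- Hockey-stick identity for descending factorials. -/
lemma aux_hockey (m : ℕ) : ∀ n : ℕ,
    ∑ j ∈ Finset.range (n + 1), (m + 1) * j.descFactorial m = (n + 1).descFactorial (m + 1) := by
  intro n
  induction n with
  | zero =>
    cases m with
    | zero => simp
    | succ m => simp [Nat.descFactorial_succ]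
  | succ n ih =>
    rw [Finset.sum_range_succ, ih]
    rcases le_or_gt m (n + 1) with hle | hlt
    · have hsub : n + 1 - m + (m + 1) = n + 2 := by omega
      rw [Nat.descFactorial_succ, Nat.succ_descFactorial_succ, ← add_mul, hsub]
    · have h0 : (n + 1).descFactorial m = 0 := Nat.descFactorial_eq_zero_iff_lt.mpr hlt
      have h1 : (n + 1).descFactorial (m + 1) = 0 :=
        Nat.descFactorial_eq_zero_iff_lt.mpr (by omega)
      have h2 : (n + 2).descFactorial (m + 1) = 0 :=
        Nat.descFactorial_eq_zero_iff_lt.mpr (by omega)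
      simp [h0, h1, h2]
      omega

/-- `∑_{n≥0} (∑_{j=0}^n (j+r)_{p,λ}) x^n/n! = e^x φ_{p,λ}^{(r)}(x) + e^x ∫_0^x φ_{p,λ}^{(r)}(t) dt`. -/
theorem tsum_partial_sums_eq_bell (l : ℝ) (p r : ℕ) (x : ℝ) :
    ∑' n : ℕ, (∑ j ∈ Finset.range (n + 1), degFallFact (j + r) l p) * x ^ n / n.factorial =
      Real.exp x * degBell l p r x +
        Real.exp x * ∫ t in (0 : ℝ)..x, degBell l p r t := by
  -- the polynomial whose values at `j` are `degFallFact (j+r) l p`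
  set P : Polynomial ℝ := ∏ i ∈ Finset.range p, (Polynomial.X + Polynomial.C ((r : ℝ) - i * l))
    with hPdef
  have hPeval : ∀ y : ℝ, P.eval y = degFallFact (y + r) l p := by
    intro y
    rw [hPdef, Polynomial.eval_prod, degFallFact]
    exact Finset.prod_congr rfl fun i _ => by simp; ring
  have hPdeg : P.degree < ((p + 1 : ℕ) : WithBot ℕ) := by
    have : P.degree ≤ p := by
      rw [hPdef]
      refine le_trans (Polynomial.degree_prod_le _ _) ?_
      refine le_trans (Finset.sum_le_sum fun i _ => le_of_eq (Polynomial.degree_X_add_C _)) ?_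
      simp
    calc P.degree ≤ (p : WithBot ℕ) := this
      _ < ((p + 1 : ℕ) : WithBot ℕ) := by exact_mod_cast Nat.lt_succ_self p
  obtain ⟨b, hb⟩ := aux_newton (p + 1) P hPdeg
  -- expansion of the coefficients
  have ha : ∀ j : ℕ, degFallFact ((j : ℝ) + r) l p
      = ∑ m ∈ Finset.range (p + 1), b m * (j.descFactorial m : ℝ) := by
    intro j
    rw [← hPeval j, hb j]
    exact Finset.sum_congr rfl fun m _ => by
      rw [descPochhammer_eval_eq_descFactorial ℝ j m]
  -- value of degBell at any point
  have hBell : ∀ t : ℝ, degBell l p r t = ∑ m ∈ Finset.range (p + 1), b m * t ^ m := by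
    intro t
    have hsum : HasSum (fun k : ℕ => degFallFact ((k : ℝ) + r) l p * t ^ k / k.factorial)
        (∑ m ∈ Finset.range (p + 1), b m * (t ^ m * Real.exp t)) := by
      refine HasSum.congr_fun (hasSum_sum fun m _ => (aux_hasSum_descFact m t).mul_left (b m))
        fun k => ?_
      rw [ha k, Finset.sum_mul, Finset.sum_div]
      exact Finset.sum_congr rfl fun m _ => by ring
    rw [degBell, hsum.tsum_eq, Real.exp_neg, Finset.mul_sum]
    refine Finset.sum_congr rfl fun m _ => ?_
    have he : Real.exp t ≠ 0 := Real.exp_ne_zero t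
    field_simp
  -- partial sums in closed form
  have hS : ∀ n : ℕ, (∑ j ∈ Finset.range (n + 1), degFallFact ((j : ℝ) + r) l p)
      = ∑ m ∈ Finset.range (p + 1), b m / (m + 1) * (((n + 1).descFactorial (m + 1) : ℕ) : ℝ) := by
    intro n
    calc ∑ j ∈ Finset.range (n + 1), degFallFact ((j : ℝ) + r) l p
        = ∑ j ∈ Finset.range (n + 1), ∑ m ∈ Finset.range (p + 1),
            b m * (j.descFactorial m : ℝ) := Finset.sum_congr rfl fun j _ => ha j
      _ = ∑ m ∈ Finset.range (p + 1), ∑ j ∈ Finset.range (n + 1),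
            b m * (j.descFactorial m : ℝ) := Finset.sum_comm
      _ = ∑ m ∈ Finset.range (p + 1), b m / (m + 1) * (((n + 1).descFactorial (m + 1) : ℕ) : ℝ) := by
          refine Finset.sum_congr rfl fun m _ => ?_
          rw [← Finset.mul_sum]
          have hh : ((m : ℝ) + 1) * (∑ j ∈ Finset.range (n + 1), (j.descFactorial m : ℝ))
              = (((n + 1).descFactorial (m + 1) : ℕ) : ℝ) := by
            rw [Finset.mul_sum]
            have := congrArg (Nat.cast (R := ℝ)) (aux_hockey m n)
            push_cast at this ⊢
            convert this using 2
          have hm1 : ((m : ℝ) + 1) ≠ 0 := by positivity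
          rw [← hh]
          field_simp
  -- the left-hand side as a convergent series
  have hLHS : HasSum
      (fun n : ℕ => (∑ j ∈ Finset.range (n + 1), degFallFact ((j : ℝ) + r) l p)
        * x ^ n / n.factorial)
      (∑ m ∈ Finset.range (p + 1), b m / (m + 1)
        * ((m + 1) * x ^ m * Real.exp x + x ^ (m + 1) * Real.exp x)) := by
    refine HasSum.congr_fun
      (hasSum_sum fun m _ => (aux_hasSum_succ_descFact m x).mul_left (b m / (m + 1)))
      fun n => ?_
    rw [hS n, Finset.sum_mul, Finset.sum_div]
    exact Finset.sum_congr rfl fun m _ => by ring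
  -- the integral of degBell
  have hInt : (∫ t in (0 : ℝ)..x, degBell l p r t)
      = ∑ m ∈ Finset.range (p + 1), b m * (x ^ (m + 1) / (m + 1)) := by
    rw [intervalIntegral.integral_congr (g := fun t => ∑ m ∈ Finset.range (p + 1), b m * t ^ m)
      (fun t _ => hBell t)]
    rw [intervalIntegral.integral_finset_sum (fun m _ =>
      (IntervalIntegrable.const_mul (intervalIntegral.intervalIntegrable_pow m) (b m)))]
    refine Finset.sum_congr rfl fun m _ => ?_
    rw [intervalIntegral.integral_const_mul, integral_pow]
    ring
  -- conclude
  rw [hLHS.tsum_eq, hBell x, hInt, Finset.mul_sum, Finset.mul_sum, ← Finset.sum_add_distrib]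
  refine Finset.sum_congr rfl fun m _ => ?_
  have hm1 : ((m : ℝ) + 1) ≠ 0 := by positivity
  field_simp
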